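/- Let U_n(i,j) denote the set of inversion sequences e of length n (1 ≤ e_t ≤ t) avoiding (≥,-,>) with e_n = i and hght(e) = j, and let dist(e) denote the number of distinct values appearing in e. Then for all n ≥ 3 and 1 ≤ j < i ≤ n and every d ≥ 1: the number of e ∈ U_n(i,j) with dist(e) = d equals the sum over ℓ = 1,…,i-1 of the number of e' ∈ U_{n-1}(ℓ,j) with dist(e') = d-1. -/

import Mathlib

/-- `e` is an inversion sequence of length `n` (positive convention):
`1 ≤ e_t ≤ t` for all `1 ≤ t ≤ n` (0-indexed: `1 ≤ e[t] ≤ t+1`). -/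
def IsInvSeq (n : ℕ) (e : List ℕ) : Prop :=
  e.length = n ∧ ∀ t, t < n → 1 ≤ e[t]! ∧ e[t]! ≤ t + 1

/-- `e` avoids the pattern `(≥,-,>)`: there are no indices `a < b < c`
with `e_a ≥ e_b` and `e_a > e_c`. -/
def InvAvoids (e : List ℕ) : Prop :=
  ¬ ∃ a b c : ℕ, a < b ∧ b < c ∧ c < e.length ∧ e[b]! ≤ e[a]! ∧ e[c]! < e[a]!

/-- `hghtIs e j` says that the height of `e` is `j`, i.e. `j` is the greatest
value `e_t` (for `t` ranging over non-final positions) with `e_t ≥ e_{t+1}`. -/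
def hghtIs (e : List ℕ) (j : ℕ) : Prop :=
  IsGreatest {x | ∃ t, t + 1 < e.length ∧ e[t + 1]! ≤ e[t]! ∧ e[t]! = x} j

/-- The number of distinct values occurring in `e`. -/
def distList (e : List ℕ) : ℕ := e.toFinset.card

lemma getbang_concat_lt (e' : List ℕ) (x t : ℕ) (h : t < e'.length) :
    (e' ++ [x])[t]! = e'[t]! := by
  rw [getElem!_pos (e' ++ [x]) t (by simp; omega), getElem!_pos e' t h,
    List.getElem_append_left h]

lemma getbang_concat_len (e' : List ℕ) (x : ℕ) :
    (e' ++ [x])[e'.length]! = x := by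
  rw [getElem!_pos (e' ++ [x]) e'.length (by simp)]
  simp

lemma step_lt {e : List ℕ} {j t : ℕ} (h : hghtIs e j) (ht : t + 1 < e.length)
    (hj : j < e[t]!) : e[t]! < e[t+1]! := by
  by_contra hle
  exact absurd (h.2 ⟨t, ht, by omega, rfl⟩) (by omega)

lemma grow {e : List ℕ} {j : ℕ} (h : hghtIs e j) {a t : ℕ} (hat : a ≤ t)
    (ht : t < e.length) (hj : j < e[a]!) : e[a]! + (t - a) ≤ e[t]! := by
  induction t with
  | zero => have : a = 0 := by omega
            subst this; simp
  | succ t ih =>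
    rcases Nat.lt_or_ge a (t+1) with h1 | h1
    · have hat' : a ≤ t := by omega
      have := ih hat' (by omega)
      have hjt : j < e[t]! := by omega
      have := step_lt h ht hjt
      omega
    · have : a = t + 1 := by omega
      subst this; simp

lemma hght_transfer {e' : List ℕ} {i j : ℕ} (hm : 2 ≤ e'.length)
    (hlast : e'[e'.length - 1]! < i) :
    hghtIs (e' ++ [i]) j ↔ hghtIs e' j := by
  have hlen : (e' ++ [i]).length = e'.length + 1 := by simp
  have hset : {x | ∃ t, t + 1 < (e' ++ [i]).length ∧ (e' ++ [i])[t+1]! ≤ (e' ++ [i])[t]! ∧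
        (e' ++ [i])[t]! = x}
      = {x | ∃ t, t + 1 < e'.length ∧ e'[t+1]! ≤ e'[t]! ∧ e'[t]! = x} := by
    ext x
    simp only [Set.mem_setOf_eq, hlen]
    constructor
    · rintro ⟨t, ht, hle, rfl⟩
      have ht' : t + 1 < e'.length := by
        rcases Nat.lt_or_ge (t+1) e'.length with h | h
        · exact h
        · have ht1 : t + 1 = e'.length := by omega
          rw [getbang_concat_lt e' i t (by omega)] at hle
          have ht2 : (e' ++ [i])[t+1]! = i := by
            rw [show t + 1 = e'.length from ht1]; exact getbang_concat_len e' i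
          rw [ht2] at hle
          have : t = e'.length - 1 := by omega
          rw [this] at hle; omega
      refine ⟨t, ht', ?_, (getbang_concat_lt e' i t (by omega)).symm⟩
      rw [getbang_concat_lt e' i (t+1) ht', getbang_concat_lt e' i t (by omega)] at hle
      exact hle
    · rintro ⟨t, ht, hle, rfl⟩
      refine ⟨t, by omega, ?_, (getbang_concat_lt e' i t (by omega))⟩
      rw [getbang_concat_lt e' i (t+1) ht, getbang_concat_lt e' i t (by omega)]
      exact hle
  unfold hghtIs
  rw [hset]

lemma not_mem_of {e' : List ℕ} {i j : ℕ} (h : hghtIs e' j) (hj : j < i)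
    (hlt : e'[e'.length - 1]! < i) : i ∉ e' := by
  intro hmem
  obtain ⟨a, ha, hae⟩ := List.mem_iff_getElem.mp hmem
  have hae' : e'[a]! = i := by rw [getElem!_pos e' a ha]; exact hae
  rcases Nat.lt_or_ge a (e'.length - 1) with h1 | h1
  · have := grow h (show a ≤ e'.length - 1 by omega)
      (show e'.length - 1 < e'.length by omega) (show j < e'[a]! by omega)
    omega
  · have : a = e'.length - 1 := by omega
    rw [this] at hae'
    omega

lemma dist_concat (e' : List ℕ) {i : ℕ} (h : i ∉ e') :
    distList (e' ++ [i]) = distList e' + 1 := by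
  unfold distList
  rw [List.toFinset_append]
  simp only [List.toFinset_cons, List.toFinset_nil, insert_empty_eq]
  rw [Finset.card_union_of_disjoint (by simp [List.mem_toFinset, h])]
  simp

lemma finite_of_invseq (m : ℕ) (S : Set (List ℕ)) (hS : ∀ e ∈ S, IsInvSeq m e) :
    S.Finite := by
  have hinj : Set.InjOn (fun e => fun t : Fin m => (⟨min e[t.1]! m, by omega⟩ : Fin (m+1))) S := by
    intro x hx y hy hxy
    obtain ⟨hx1, hx2⟩ := hS x hx
    obtain ⟨hy1, hy2⟩ := hS y hy
    apply List.ext_getElem (by rw [hx1, hy1])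
    intro t h1 h2
    have ht : t < m := by omega
    have := congrFun hxy ⟨t, ht⟩
    simp only [Fin.mk.injEq] at this
    have hxm : x[t]! ≤ m := by have := (hx2 t ht).2; omega
    have hym : y[t]! ≤ m := by have := (hy2 t ht).2; omega
    rw [← getElem!_pos x t h1, ← getElem!_pos y t h2]
    omega
  exact Set.Finite.of_finite_image (Set.toFinite _) hinj

lemma ncard_biUnion' {α β : Type*} [DecidableEq α] (s : Finset α) (g : α → Set β)
    (hfin : ∀ a ∈ s, (g a).Finite)
    (hdisj : ∀ a ∈ s, ∀ b ∈ s, a ≠ b → Disjoint (g a) (g b)) :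
    (⋃ a ∈ s, g a).ncard = ∑ a ∈ s, (g a).ncard := by
  induction s using Finset.induction_on with
  | empty => simp
  | @insert a s ha ih =>
    rw [Finset.sum_insert ha, Finset.set_biUnion_insert]
    have hd : Disjoint (g a) (⋃ b ∈ s, g b) := by
      rw [Set.disjoint_iUnion₂_right]
      intro b hb
      exact hdisj a (Finset.mem_insert_self a s) b (Finset.mem_insert_of_mem hb)
        (fun h => ha (h ▸ hb))
    rw [Set.ncard_union_eq hd (hfin a (Finset.mem_insert_self a s))
      (Set.Finite.biUnion s.finite_toSet (fun b hb => hfin b (Finset.mem_insert_of_mem hb)))]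
    rw [ih (fun b hb => hfin b (Finset.mem_insert_of_mem hb))
      (fun b hb c hc => hdisj b (Finset.mem_insert_of_mem hb) c (Finset.mem_insert_of_mem hc))]

/-- Recurrence for `u_n(i,j)` when `j < i`. -/
theorem stmt1 (n i j d : ℕ) (hn : 3 ≤ n) (hj : 1 ≤ j) (hji : j < i) (hi : i ≤ n)
    (hd : 1 ≤ d) :
    {e : List ℕ | IsInvSeq n e ∧ InvAvoids e ∧ e[n - 1]! = i ∧ hghtIs e j ∧
        distList e = d}.ncard
      = ∑ ℓ ∈ Finset.Icc 1 (i - 1),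
        {e : List ℕ | IsInvSeq (n - 1) e ∧ InvAvoids e ∧ e[n - 2]! = ℓ ∧ hghtIs e j ∧
          distList e = d - 1}.ncard := by
  classical
  set B : ℕ → Set (List ℕ) := fun ℓ =>
    {e : List ℕ | IsInvSeq (n - 1) e ∧ InvAvoids e ∧ e[n - 2]! = ℓ ∧ hghtIs e j ∧
      distList e = d - 1} with hB
  have hBfin : ∀ ℓ, (B ℓ).Finite := fun ℓ =>
    finite_of_invseq (n-1) (B ℓ) (fun e he => he.1)
  have key : {e : List ℕ | IsInvSeq n e ∧ InvAvoids e ∧ e[n - 1]! = i ∧ hghtIs e j ∧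
        distList e = d}
      = ⋃ ℓ ∈ Finset.Icc 1 (i - 1), (fun e' => e' ++ [i]) '' B ℓ := by
    ext e
    simp only [Set.mem_setOf_eq, Set.mem_iUnion, Set.mem_image, Finset.mem_Icc, hB,
      exists_prop]
    constructor
    · rintro ⟨⟨hlen, hbound⟩, havoid, hlast, hhght, hdist⟩
      have hne : e ≠ [] := by intro h; rw [h] at hlen; simp at hlen; omega
      have h1 := List.dropLast_append_getLast hne
      have h2 : e.getLast hne = i := by
        rw [List.getLast_eq_getElem, ← getElem!_pos e (e.length - 1) (by omega), hlen]
        exact hlast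
      rw [h2] at h1
      set e' := e.dropLast with he'
      have hsplit : e = e' ++ [i] := h1.symm
      have hlen' : e'.length = n - 1 := by rw [he', List.length_dropLast, hlen]
      have hEt : ∀ t, t < n - 1 → e[t]! = e'[t]! := by
        intro t ht
        rw [hsplit]
        exact getbang_concat_lt e' i t (by omega)
      -- last entry of e' is < i
      have hlt : e'[n-2]! < i := by
        by_contra hge
        push_neg at hge
        have hmem : e[n-2]! ∈ {x | ∃ t, t + 1 < e.length ∧ e[t + 1]! ≤ e[t]! ∧ e[t]! = x} := by
          refine ⟨n-2, by omega, ?_, rfl⟩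
          have hx : e[n-2+1]! = e[n-1]! := by rw [show n-2+1 = n-1 by omega]
          rw [hx, hlast, hEt (n-2) (by omega)]
          exact hge
        have := hhght.2 hmem
        rw [hEt (n-2) (by omega)] at this
        omega
      have hhght' : hghtIs e' j := by
        have := hsplit ▸ hhght
        exact (hght_transfer (by omega) (by rw [show e'.length - 1 = n - 2 by omega]; exact hlt)).mp this
      have hnm : i ∉ e' := not_mem_of hhght' hji
        (by rw [show e'.length - 1 = n - 2 by omega]; exact hlt)
      have hdist' : distList e' = d - 1 := by
        have : distList e = distList e' + 1 := by rw [hsplit]; exact dist_concat e' hnm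
        omega
      have havoid' : InvAvoids e' := by
        rintro ⟨a, b, c, hab, hbc, hc, hba, hca⟩
        exact havoid ⟨a, b, c, hab, hbc, by omega,
          by rw [hEt b (by omega), hEt a (by omega)]; exact hba,
          by rw [hEt c (by omega), hEt a (by omega)]; exact hca⟩
      have hseq' : IsInvSeq (n-1) e' := by
        refine ⟨hlen', fun t ht => ?_⟩
        rw [← hEt t ht]
        exact hbound t (by omega)
      have hl1 : 1 ≤ e'[n-2]! := by
        rw [← hEt (n-2) (by omega)]
        exact (hbound (n-2) (by omega)).1
      exact ⟨e'[n-2]!, ⟨hl1, by omega⟩, e',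
        ⟨hseq', havoid', rfl, hhght', hdist'⟩, hsplit.symm⟩
    · rintro ⟨ℓ, ⟨hl1, hl2⟩, e', ⟨⟨hlen', hbound'⟩, havoid', hlval, hhght', hdist'⟩, heq⟩
      subst heq
      have hlt : e'[n-2]! < i := by rw [hlval]; omega
      have hEt : ∀ t, t < n - 1 → (e' ++ [i])[t]! = e'[t]! := fun t ht =>
        getbang_concat_lt e' i t (by omega)
      have hlast : (e' ++ [i])[n-1]! = i := by
        rw [show n - 1 = e'.length by omega]
        exact getbang_concat_len e' i
      have hlen : (e' ++ [i]).length = n := by simp; omega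
      refine ⟨⟨hlen, fun t ht => ?_⟩, ?_, hlast, ?_, ?_⟩
      · rcases Nat.lt_or_ge t (n-1) with h | h
        · rw [hEt t h]; exact hbound' t (by omega)
        · have : t = n - 1 := by omega
          subst this
          rw [hlast]
          omega
      · -- InvAvoids
        rintro ⟨a, b, c, hab, hbc, hc, hba, hca⟩
        rw [hlen] at hc
        rcases Nat.lt_or_ge c (n-1) with h | h
        · exact havoid' ⟨a, b, c, hab, hbc, by omega,
            by rw [hEt b (by omega), hEt a (by omega)] at hba; exact hba,
            by rw [hEt c (by omega), hEt a (by omega)] at hca; exact hca⟩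
        · have hc1 : c = n - 1 := by omega
          rw [hc1, hlast, hEt a (by omega)] at hca
          have := grow hhght' (show a ≤ n - 2 by omega)
            (show n - 2 < e'.length by omega) (show j < e'[a]! by omega)
          omega
      · exact (hght_transfer (by omega)
          (by rw [show e'.length - 1 = n - 2 by omega]; exact hlt)).mpr hhght'
      · have hnm : i ∉ e' := not_mem_of hhght' hji
          (by rw [show e'.length - 1 = n - 2 by omega]; exact hlt)
        rw [dist_concat e' hnm, hdist']
        omega
  rw [key, ncard_biUnion']
  · refine Finset.sum_congr rfl fun ℓ _ => ?_
    exact Set.ncard_image_of_injective _ (fun a b h => by simpa using h)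
  · exact fun ℓ _ => (hBfin ℓ).image _
  · intro a ha b hb hab
    rw [Set.disjoint_left]
    rintro e ⟨x, hx, rfl⟩ ⟨y, hy, hxy⟩
    have : y = x := by simpa using hxy
    subst this
    exact hab (hx.2.2.1.symm.trans hy.2.2.1)
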